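/- Let A and B be real symmetric PSD matrices, J a compatible matrix. Then ‖A J B‖_F² ≤ λ_max(A) λ_max(B) · ⟨J, A J B⟩_F, where ⟨·,·⟩_F is the Frobenius inner product. -/

import Mathlib

open Matrix

noncomputable def frobNorm {p m : ℕ} (M : Matrix (Fin p) (Fin m) ℝ) : ℝ :=
  Real.sqrt (∑ i, ∑ j, (M i j) ^ 2)

/-- Largest eigenvalue of a real symmetric PSD matrix. -/
noncomputable def lamMax {p : ℕ} (A : Matrix (Fin (p + 1)) (Fin (p + 1)) ℝ)
    (hA : A.PosSemidef) : ℝ :=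
  (Finset.univ : Finset (Fin (p + 1))).sup' Finset.univ_nonempty
    hA.isHermitian.eigenvalues

lemma trace_nonneg_psd {n : Type*} [Fintype n] [DecidableEq n] {P : Matrix n n ℝ}
    (hP : P.PosSemidef) : 0 ≤ P.trace := by
  rw [Matrix.trace]
  apply Finset.sum_nonneg
  intro i _
  exact hP.diag_nonneg

lemma trace_mul_nonneg_psd {n : Type*} [Fintype n] [DecidableEq n] {M C : Matrix n n ℝ}
    (hM : M.PosSemidef) (hC : C.PosSemidef) : 0 ≤ (M * C).trace := by
  obtain ⟨S, rfl⟩ : ∃ S : Matrix n n ℝ, M = Sᴴ * S := by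
    open scoped MatrixOrder in exact CStarAlgebra.nonneg_iff_eq_star_mul_self.mp hM.nonneg
  rw [← Matrix.trace_mul_cycle]
  exact trace_nonneg_psd (hC.mul_mul_conjTranspose_same S)

lemma smul_sub_sq_psd {n : Type*} [Fintype n] [DecidableEq n] {A : Matrix n n ℝ}
    (hA : A.PosSemidef) (lam : ℝ) (hlam : ∀ i, hA.isHermitian.eigenvalues i ≤ lam) :
    (lam • A - A * A).PosSemidef := by
  set U := (Matrix.IsHermitian.eigenvectorUnitary hA.isHermitian : Matrix n n ℝ) with hU
  have hUU : star U * U = 1 :=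
    Matrix.mem_unitaryGroup_iff'.mp (Matrix.IsHermitian.eigenvectorUnitary hA.isHermitian).2
  set f := hA.isHermitian.eigenvalues with hf
  set D := Matrix.diagonal f with hD
  have hspec : A = U * D * star U := by
    have := hA.isHermitian.spectral_theorem
    rwa [RCLike.ofReal_real_eq_id, Function.id_comp] at this
  have key : lam • A - A * A = U * (lam • D - D * D) * star U := by
    rw [hspec]
    have : (U * D * star U) * (U * D * star U) = U * (D * D) * star U := by
      rw [show U * D * star U * (U * D * star U) = U * D * (star U * U) * D * star U by
        noncomm_ring, hUU]
      noncomm_ring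
    rw [this, Matrix.mul_sub, Matrix.sub_mul, Matrix.mul_smul, Matrix.smul_mul]
  rw [key]
  have hdiag : (lam • D - D * D) = Matrix.diagonal (fun i => lam * f i - f i * f i) := by
    rw [hD, Matrix.diagonal_mul_diagonal, ← Matrix.diagonal_smul, ← Matrix.diagonal_sub]
    rfl
  have hpsd : (lam • D - D * D).PosSemidef := by
    rw [hdiag]
    refine Matrix.posSemidef_diagonal_iff.mpr fun i => ?_
    have h1 := hA.eigenvalues_nonneg i
    have h2 := hlam i
    nlinarith
  rw [Matrix.star_eq_conjTranspose]
  exact hpsd.mul_mul_conjTranspose_same U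

lemma trace_transpose_mul_sum {p m : ℕ} (X Y : Matrix (Fin p) (Fin m) ℝ) :
    (Xᵀ * Y).trace = ∑ i, ∑ j, X i j * Y i j := by
  simp only [Matrix.trace, Matrix.diag, Matrix.mul_apply, Matrix.transpose_apply]
  rw [Finset.sum_comm]

lemma trace_sq_mul_le {n : Type*} [Fintype n] [DecidableEq n] {A C : Matrix n n ℝ}
    (hA : A.PosSemidef) (hC : C.PosSemidef) (lam : ℝ)
    (hlam : ∀ i, hA.isHermitian.eigenvalues i ≤ lam) :
    ((A * A) * C).trace ≤ lam * (A * C).trace := by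
  have h := trace_mul_nonneg_psd (smul_sub_sq_psd hA lam hlam) hC
  rw [Matrix.sub_mul, Matrix.smul_mul, Matrix.trace_sub, Matrix.trace_smul] at h
  simp only [smul_eq_mul] at h
  linarith

/-- For symmetric PSD `A`, `B` and compatible `J`:
`‖A J B‖_F² ≤ λ_max(A) λ_max(B) ⟨J, A J B⟩_F`. -/
theorem stmt_18 {p m : ℕ}
    (A : Matrix (Fin (p + 1)) (Fin (p + 1)) ℝ)
    (B : Matrix (Fin (m + 1)) (Fin (m + 1)) ℝ)
    (hA : A.PosSemidef) (hB : B.PosSemidef)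
    (J : Matrix (Fin (p + 1)) (Fin (m + 1)) ℝ) :
    frobNorm (A * J * B) ^ 2
      ≤ lamMax A hA * lamMax B hB * ∑ i, ∑ j, J i j * (A * J * B) i j := by
  set M := A * J * B with hM
  have hAt : Aᵀ = A := by
    rw [← Matrix.conjTranspose_eq_transpose_of_trivial]; exact hA.isHermitian.eq
  have hBt : Bᵀ = B := by
    rw [← Matrix.conjTranspose_eq_transpose_of_trivial]; exact hB.isHermitian.eq
  have hJt : Jᴴ = Jᵀ := Matrix.conjTranspose_eq_transpose_of_trivial J
  have hlamA : ∀ i, hA.isHermitian.eigenvalues i ≤ lamMax A hA :=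
    fun i => Finset.le_sup' _ (Finset.mem_univ i)
  have hlamB : ∀ i, hB.isHermitian.eigenvalues i ≤ lamMax B hB :=
    fun i => Finset.le_sup' _ (Finset.mem_univ i)
  have hlamA0 : 0 ≤ lamMax A hA := le_trans (hA.eigenvalues_nonneg 0) (hlamA 0)
  -- C₁ and C₂
  set C₁ := J * (B * B) * Jᵀ with hC₁def
  set C₂ := Jᵀ * (A * A) * J with hC₂def'
  have hBB : (B * B).PosSemidef := by
    have := Matrix.posSemidef_conjTranspose_mul_self B
    rwa [hB.isHermitian.eq] at this
  have hC₁ : C₁.PosSemidef := by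
    have := hBB.mul_mul_conjTranspose_same J
    rwa [hJt] at this
  set C₂' := Jᵀ * A * J with hC₂def
  have hC₂' : C₂'.PosSemidef := by
    have := hA.conjTranspose_mul_mul_same J
    rwa [hJt] at this
  -- LHS as a trace
  have hL1 : frobNorm M ^ 2 = (Mᵀ * M).trace := by
    rw [frobNorm, Real.sq_sqrt (by positivity), trace_transpose_mul_sum]
    simp [pow_two]
  have hL2 : (Mᵀ * M).trace = ((A * A) * C₁).trace := by
    have e : Mᵀ * M = (B * Jᵀ) * (A * (A * J * B)) := by
      rw [hM, Matrix.transpose_mul, Matrix.transpose_mul, hAt, hBt]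
      simp only [Matrix.mul_assoc]
    have e2 : (A * (A * J * B)) * (B * Jᵀ) = (A * A) * C₁ := by
      simp only [hC₁def, Matrix.mul_assoc]
    rw [e, Matrix.trace_mul_comm, e2]
  -- RHS as a trace
  have hR : ∑ i, ∑ j, J i j * M i j = (B * C₂').trace := by
    have e : Jᵀ * M = C₂' * B := by
      simp only [hM, hC₂def, Matrix.mul_assoc]
    rw [← trace_transpose_mul_sum, e, Matrix.trace_mul_comm]
  -- middle equality
  have hMid : (A * C₁).trace = ((B * B) * C₂').trace := by
    have e : A * C₁ = (A * J) * ((B * B) * Jᵀ) := by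
      simp only [hC₁def, Matrix.mul_assoc]
    have e2 : ((B * B) * Jᵀ) * (A * J) = (B * B) * C₂' := by
      simp only [hC₂def, Matrix.mul_assoc]
    rw [e, Matrix.trace_mul_comm, e2]
  have i1 : ((A * A) * C₁).trace ≤ lamMax A hA * (A * C₁).trace :=
    trace_sq_mul_le hA hC₁ _ hlamA
  have i2 : ((B * B) * C₂').trace ≤ lamMax B hB * (B * C₂').trace :=
    trace_sq_mul_le hB hC₂' _ hlamB
  calc frobNorm M ^ 2 = ((A * A) * C₁).trace := by rw [hL1, hL2]
    _ ≤ lamMax A hA * (A * C₁).trace := i1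
    _ = lamMax A hA * ((B * B) * C₂').trace := by rw [hMid]
    _ ≤ lamMax A hA * (lamMax B hB * (B * C₂').trace) := by
        exact mul_le_mul_of_nonneg_left i2 hlamA0
    _ = lamMax A hA * lamMax B hB * ∑ i, ∑ j, J i j * M i j := by rw [hR]; ring
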